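/- Let 0 ≤ α < 1 and 0 < r < 1. If |aₙ| ≤ (n+1)/2 and |bₙ| ≤ (n-1)/2 for all n ≥ 2 (with b₁ = 0), and (2-α)(1-r)³ + αr(1-r)² - 1 - r ≥ 0, then ∑_{n≥2} ((n-α)/(1-α))|aₙ| r^{n-1} + ∑_{n≥2} ((n+α)/(1-α))|bₙ| r^{n-1} ≤ 1. -/

import Mathlib

theorem stmt_12 (α : ℝ) (hα0 : 0 ≤ α) (hα1 : α < 1) (r : ℝ) (h0 : 0 < r) (h1 : r < 1)
    (a b : ℕ → ℂ) (hb1 : b 1 = 0)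
    (ha : ∀ n : ℕ, 2 ≤ n → ‖a n‖ ≤ (n + 1) / 2)
    (hb : ∀ n : ℕ, 2 ≤ n → ‖b n‖ ≤ (n - 1) / 2)
    (hpoly : 0 ≤ (2 - α) * (1 - r) ^ 3 + α * r * (1 - r) ^ 2 - 1 - r) :
    (∑' n : ℕ, (((n + 2 : ℝ) - α) / (1 - α)) * ‖a (n + 2)‖ * r ^ (n + 1))
      + (∑' n : ℕ, (((n + 2 : ℝ) + α) / (1 - α)) * ‖b (n + 2)‖ * r ^ (n + 1)) ≤ 1 := by
  have hα : (0:ℝ) < 1 - α := by linarith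
  have hr : (0:ℝ) < 1 - r := by linarith
  have hrn : ‖r‖ < 1 := by rw [Real.norm_eq_abs, abs_of_pos h0]; exact h1
  set A : ℕ → ℝ := fun n => (((n + 2 : ℝ) - α) / (1 - α)) * ‖a (n + 2)‖ * r ^ (n + 1) with hA
  set B : ℕ → ℝ := fun n => (((n + 2 : ℝ) + α) / (1 - α)) * ‖b (n + 2)‖ * r ^ (n + 1) with hB
  set g : ℕ → ℝ := fun n => (((n:ℝ) + 2) ^ 2 - α) / (1 - α) * r ^ (n + 1) with hg
  set S : ℝ := r / (1 - α) * (2 / (1 - r) ^ 3 + 1 / (1 - r) ^ 2 + (1 - α) / (1 - r)) with hS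
  -- HasSum of g
  have h2 : HasSum (fun n : ℕ => ((n + 2).choose 2 : ℝ) * r ^ n) (1 / (1 - r) ^ 3) :=
    hasSum_choose_mul_geometric_of_norm_lt_one 2 hrn
  have hc1 : HasSum (fun n : ℕ => ((n + 1).choose 1 : ℝ) * r ^ n) (1 / (1 - r) ^ 2) :=
    hasSum_choose_mul_geometric_of_norm_lt_one 1 hrn
  have h0' : HasSum (fun n : ℕ => (r : ℝ) ^ n) ((1 - r)⁻¹) :=
    hasSum_geometric_of_lt_one h0.le h1
  have hgsum : HasSum g S := by
    have := (((h2.mul_left 2).add hc1).add (h0'.mul_left (1 - α))).mul_left (r / (1 - α))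
    convert this using 1
    · rfl
    · funext n
      have e2 : ((n + 2).choose 2 : ℝ) = (n + 2) * (n + 1) / 2 := by
        rw [Nat.cast_choose_two]; push_cast; ring
      have e1 : ((n + 1).choose 1 : ℝ) = (n + 1) := by
        rw [Nat.choose_one_right]; push_cast; ring
      simp only [hg, e2, e1]
      rw [pow_succ]
      field_simp
      ring
    · rw [hS]
      field_simp
  -- termwise bounds
  have hAn : ∀ n, 0 ≤ A n := by
    intro n
    apply mul_nonneg (mul_nonneg _ (norm_nonneg _)) (pow_nonneg h0.le _)
    apply div_nonneg _ hα.le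
    have : (0:ℝ) ≤ (n:ℝ) := Nat.cast_nonneg n
    linarith
  have hBn : ∀ n, 0 ≤ B n := by
    intro n
    apply mul_nonneg (mul_nonneg _ (norm_nonneg _)) (pow_nonneg h0.le _)
    apply div_nonneg _ hα.le
    have : (0:ℝ) ≤ (n:ℝ) := Nat.cast_nonneg n
    linarith
  have hABg : ∀ n, A n + B n ≤ g n := by
    intro n
    have ha' := ha (n + 2) (by omega)
    have hb' := hb (n + 2) (by omega)
    have hn : (0:ℝ) ≤ (n:ℝ) := Nat.cast_nonneg n
    push_cast at ha' hb'
    have hca : (0:ℝ) ≤ ((n:ℝ) + 2 - α) / (1 - α) := by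
      apply div_nonneg _ hα.le; linarith
    have hcb : (0:ℝ) ≤ ((n:ℝ) + 2 + α) / (1 - α) := by
      apply div_nonneg _ hα.le; linarith
    have hp : (0:ℝ) ≤ r ^ (n + 1) := pow_nonneg h0.le _
    have hAle : A n ≤ ((n:ℝ) + 2 - α) / (1 - α) * (((n:ℝ) + 2 + 1) / 2) * r ^ (n + 1) := by
      apply mul_le_mul_of_nonneg_right _ hp
      exact mul_le_mul_of_nonneg_left ha' hca
    have hBle : B n ≤ ((n:ℝ) + 2 + α) / (1 - α) * (((n:ℝ) + 2 - 1) / 2) * r ^ (n + 1) := by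
      apply mul_le_mul_of_nonneg_right _ hp
      exact mul_le_mul_of_nonneg_left hb' hcb
    have key : ((n:ℝ) + 2 - α) / (1 - α) * (((n:ℝ) + 2 + 1) / 2) * r ^ (n + 1)
        + ((n:ℝ) + 2 + α) / (1 - α) * (((n:ℝ) + 2 - 1) / 2) * r ^ (n + 1) = g n := by
      simp only [hg]
      field_simp
      ring
    linarith
  have hgs : Summable g := hgsum.summable
  have hAs : Summable A :=
    Summable.of_nonneg_of_le hAn (fun n => by have := hABg n; have := hBn n; linarith) hgs
  have hBs : Summable B :=
    Summable.of_nonneg_of_le hBn (fun n => by have := hABg n; have := hAn n; linarith) hgs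
  have hsum : (∑' n, A n) + (∑' n, B n) ≤ S := by
    rw [← Summable.tsum_add hAs hBs, ← hgsum.tsum_eq]
    exact Summable.tsum_le_tsum hABg (hAs.add hBs) hgs
  have hS1 : S ≤ 1 := by
    rw [hS]
    rw [div_add_div _ _ (by positivity) (by positivity), div_add_div _ _ (by positivity) (by positivity)]
    rw [div_mul_div_comm, div_le_one (by positivity)]
    nlinarith [mul_pos hα (pow_pos hr 3), hpoly, mul_pos h0 hr, sq_nonneg (1-r)]
  exact le_trans hsum hS1
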